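/- Let n ≥ 1 and let μ = (a₁,…,a_n) ∈ ℤⁿ with a₁ ≥ a₂ ≥ ⋯ ≥ a_n (so μ is itself a Newton vector). Then there exists a Newton vector ν with ν ≤ μ, ν ≠ μ, and 𝐢(ν,μ) + 𝐛₁(ν,μ) = 0 if and only if a_j − a_{j+1} = 1 for some 1 ≤ j ≤ n−1. (This is the assertion of §4.4 of the paper for G = GL_n: since the generic Newton point ν_{μ,max} equals μ, there exists [b] < [b_{μ,max}] with Ess-gap([b],[b_{μ,max}]) = 0 exactly when some consecutive entries of μ differ by 1.) -/

import Mathlib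

/-- Partial sum `P_ν(j) = ν₁ + ⋯ + ν_j` (0-indexed entries `ν 0, …, ν (n-1)`). -/
def newtonP (ν : ℕ → ℚ) (j : ℕ) : ℚ := ∑ k ∈ Finset.range j, ν k

/-- A rational number is an integer. -/
def IsIntQ (q : ℚ) : Prop := ∃ m : ℤ, (m : ℚ) = q

/-- `ν` is a Newton vector (of length `n`): weakly decreasing, integral total sum, and
integral partial sum at every breakpoint (so the Newton polygon has lattice vertices). -/
def IsNewton (n : ℕ) (ν : ℕ → ℚ) : Prop :=
  (∀ k, k + 1 < n → ν (k + 1) ≤ ν k) ∧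
  IsIntQ (newtonP ν n) ∧
  ∀ j, 1 ≤ j → j ≤ n - 1 → ν (j - 1) ≠ ν j → IsIntQ (newtonP ν j)

/-- The dominance order `ν ≤ ν'` on Newton vectors. -/
def NewtonLE (n : ℕ) (ν ν' : ℕ → ℚ) : Prop :=
  newtonP ν n = newtonP ν' n ∧ ∀ j, 1 ≤ j → j ≤ n - 1 → newtonP ν j ≤ newtonP ν' j

/-- `𝐢(ν,ν')`: the number of lattice points strictly between the two Newton polygons. -/
noncomputable def nI (n : ℕ) (ν ν' : ℕ → ℚ) : ℕ :=
  Set.ncard {p : ℕ × ℤ | 1 ≤ p.1 ∧ p.1 ≤ n - 1 ∧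
    newtonP ν p.1 < (p.2 : ℚ) ∧ (p.2 : ℚ) < newtonP ν' p.1}

/-- `𝐛₁(ν,ν')`: lattice points on the lower polygon not lying on the upper one. -/
noncomputable def nB1 (n : ℕ) (ν ν' : ℕ → ℚ) : ℕ :=
  Set.ncard {j : ℕ | 1 ≤ j ∧ j ≤ n - 1 ∧ IsIntQ (newtonP ν j) ∧ newtonP ν j < newtonP ν' j}

/-- `𝐛₂(ν,ν')`: lattice points on the upper polygon not lying on the lower one. -/
noncomputable def nB2 (n : ℕ) (ν ν' : ℕ → ℚ) : ℕ :=
  Set.ncard {j : ℕ | 1 ≤ j ∧ j ≤ n - 1 ∧ IsIntQ (newtonP ν' j) ∧ newtonP ν j < newtonP ν' j}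

/-- `𝐀(ν,ν') = Σ_{j=1}^{n-1} (P_{ν'}(j) − P_ν(j))`, the area between the polygons. -/
def nA (n : ℕ) (ν ν' : ℕ → ℚ) : ℚ :=
  ∑ j ∈ Finset.Icc 1 (n - 1), (newtonP ν' j - newtonP ν j)

/- ### Auxiliary lemmas -/

private lemma newtonP_int (a : ℕ → ℤ) (μ : ℕ → ℚ) (hμ : ∀ k, μ k = ((a k : ℤ) : ℚ)) (j : ℕ) :
    newtonP μ j = ((∑ k ∈ Finset.range j, a k : ℤ) : ℚ) := by
  unfold newtonP
  push_cast
  exact Finset.sum_congr rfl fun k _ => hμ k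

private lemma mono_aux (n : ℕ) (a : ℕ → ℤ) (ha : ∀ k, k + 1 < n → a (k + 1) ≤ a k) :
    ∀ p q, p ≤ q → q < n → a q ≤ a p := by
  intro p q
  induction q with
  | zero => intro h _; rw [Nat.le_zero.mp h]
  | succ q ih =>
    intro hpq hq
    rcases Nat.eq_or_lt_of_le hpq with h | h
    · rw [h]
    · exact le_trans (ha q hq) (ih (by omega) (by omega))

private lemma step_aux (n : ℕ) (a : ℕ → ℤ) (ha : ∀ k, k + 1 < n → a (k + 1) ≤ a k)
    (p : ℕ) : ∀ q, p ≤ q → q < n → a p = a q + 1 →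
    ∃ j, j + 1 < n ∧ a j - a (j + 1) = 1 := by
  intro q
  induction q with
  | zero =>
    intro hpq _ h
    exfalso
    rw [Nat.le_zero.mp hpq] at h
    omega
  | succ q ih =>
    intro hpq hq h
    rcases Nat.eq_or_lt_of_le hpq with he | hlt
    · exfalso; rw [he] at h; omega
    · have hpq' : p ≤ q := by omega
      by_cases hc : a q = a (q + 1)
      · exact ih hpq' (by omega) (by rw [hc]; exact h)
      · have h1 : a (q + 1) ≤ a q := ha q hq
        have h2 : a q ≤ a p := mono_aux n a ha p q hpq' (by omega)
        exact ⟨q, hq, by omega⟩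

/-- §4.4 of the paper, `G = GL_n`: let `μ ∈ ℤⁿ` be weakly decreasing
(so `μ` is itself a Newton vector, equal to the generic Newton point `ν_{μ,max}`). There
exists a Newton vector `ν ≤ μ` with `ν ≠ μ` and `𝐢(ν,μ) + 𝐛₁(ν,μ) = 0` — i.e. a class
`[b] < [b_{μ,max}]` with `Ess-gap([b],[b_{μ,max}]) = 0` — iff two consecutive entries of
`μ` differ by `1`. -/
theorem exists_essGap_zero_iff_consecutive_diff_one (n : ℕ) (hn : 1 ≤ n)
    (a : ℕ → ℤ) (ha : ∀ k, k + 1 < n → a (k + 1) ≤ a k)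
    (μ : ℕ → ℚ) (hμ : ∀ k, μ k = ((a k : ℤ) : ℚ)) :
    (∃ ν : ℕ → ℚ, IsNewton n ν ∧ NewtonLE n ν μ ∧ (∃ k, k < n ∧ ν k ≠ μ k) ∧
        nI n ν μ + nB1 n ν μ = 0) ↔
      ∃ j, j + 1 < n ∧ a j - a (j + 1) = 1 := by
  classical
  set b : ℕ → ℤ := fun j => ∑ k ∈ Finset.range j, a k with hbdef
  have hPμ : ∀ j, newtonP μ j = (b j : ℚ) := newtonP_int a μ hμ
  constructor
  · rintro ⟨ν, ⟨hdec, hint, hbrk⟩, ⟨hLEn, hLEj⟩, ⟨k₀, hk₀n, hk₀⟩, hzero⟩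
    -- The two counted sets are empty.
    have hI0 : nI n ν μ = 0 := by omega
    have hB0 : nB1 n ν μ = 0 := by omega
    have hfin1 : ∀ x y : ℚ, {m : ℤ | x < (m : ℚ) ∧ (m : ℚ) < y}.Finite := by
      intro x y
      apply (Set.finite_Icc ⌈x⌉ ⌊y⌋).subset
      rintro m ⟨h1, h2⟩
      exact ⟨Int.ceil_le.mpr h1.le, Int.le_floor.mpr h2.le⟩
    have hIfin : {p : ℕ × ℤ | 1 ≤ p.1 ∧ p.1 ≤ n - 1 ∧
        newtonP ν p.1 < (p.2 : ℚ) ∧ (p.2 : ℚ) < newtonP μ p.1}.Finite := by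
      apply Set.Finite.subset (Set.Finite.biUnion (Finset.Icc 1 (n - 1)).finite_toSet
        (fun j _ => ((hfin1 (newtonP ν j) (newtonP μ j)).image (fun m => (j, m)))))
      rintro ⟨j, m⟩ ⟨h1, h2, h3, h4⟩
      exact Set.mem_biUnion (by simp [Finset.mem_Icc]; omega) ⟨m, ⟨h3, h4⟩, rfl⟩
    have hBfin : {j : ℕ | 1 ≤ j ∧ j ≤ n - 1 ∧ IsIntQ (newtonP ν j) ∧
        newtonP ν j < newtonP μ j}.Finite := by
      apply (Set.finite_Icc 1 (n - 1)).subset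
      rintro j ⟨h1, h2, _, _⟩
      exact ⟨h1, h2⟩
    rw [nI, Set.ncard_eq_zero hIfin] at hI0
    rw [nB1, Set.ncard_eq_zero hBfin] at hB0
    have hIempty : ∀ j (m : ℤ), 1 ≤ j → j ≤ n - 1 →
        ¬(newtonP ν j < (m : ℚ) ∧ (m : ℚ) < newtonP μ j) := by
      intro j m h1 h2 h3
      have : (j, m) ∈ ({p : ℕ × ℤ | 1 ≤ p.1 ∧ p.1 ≤ n - 1 ∧
          newtonP ν p.1 < (p.2 : ℚ) ∧ (p.2 : ℚ) < newtonP μ p.1}) := ⟨h1, h2, h3.1, h3.2⟩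
      rw [hI0] at this
      exact this
    have hBempty : ∀ j, 1 ≤ j → j ≤ n - 1 → newtonP ν j < newtonP μ j →
        ¬ IsIntQ (newtonP ν j) := by
      intro j h1 h2 h3 h4
      have : j ∈ ({j : ℕ | 1 ≤ j ∧ j ≤ n - 1 ∧ IsIntQ (newtonP ν j) ∧
          newtonP ν j < newtonP μ j}) := ⟨h1, h2, h4, h3⟩
      rw [hB0] at this
      exact this
    -- the gap estimate
    have hgap : ∀ j, 1 ≤ j → j ≤ n - 1 → newtonP ν j < newtonP μ j →
        (b j : ℚ) - 1 < newtonP ν j := by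
      intro j h1 h2 h3
      rcases lt_trichotomy (newtonP ν j) ((b j : ℚ) - 1) with h | h | h
      · exact absurd ⟨(by push_cast; linarith : newtonP ν j < ((b j - 1 : ℤ) : ℚ)),
          (by rw [hPμ]; push_cast; linarith : ((b j - 1 : ℤ) : ℚ) < newtonP μ j)⟩
          (hIempty j (b j - 1) h1 h2)
      · exact absurd ⟨b j - 1, by push_cast; linarith⟩ (hBempty j h1 h2 h3)
      · exact h
    -- there is a strict inequality somewhere
    have hex : ∃ j, 1 ≤ j ∧ j ≤ n - 1 ∧ newtonP ν j < newtonP μ j := by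
      by_contra hcon
      push_neg at hcon
      have hall : ∀ j, j ≤ n → newtonP ν j = newtonP μ j := by
        intro j hj
        rcases Nat.eq_zero_or_pos j with h0 | h1
        · subst h0; simp [newtonP]
        rcases Nat.eq_or_lt_of_le hj with he | hlt
        · rw [he]; exact hLEn
        · exact le_antisymm (hLEj j h1 (by omega)) (hcon j h1 (by omega))
      apply hk₀
      have e1 : newtonP ν (k₀ + 1) = newtonP ν k₀ + ν k₀ := Finset.sum_range_succ ν k₀
      have e2 : newtonP μ (k₀ + 1) = newtonP μ k₀ + μ k₀ := Finset.sum_range_succ μ k₀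
      have := hall k₀ (by omega)
      have := hall (k₀ + 1) (by omega)
      linarith
    set j := Nat.find hex with hjdef
    obtain ⟨hj1, hj2, hj3⟩ := Nat.find_spec hex
    have hjmin : ∀ m, m < j → ¬(1 ≤ m ∧ m ≤ n - 1 ∧ newtonP ν m < newtonP μ m) :=
      fun m hm => Nat.find_min hex hm
    have hex2 : ∃ k, j ≤ k ∧ newtonP ν (k + 1) = newtonP μ (k + 1) := by
      refine ⟨n - 1, hj2, ?_⟩
      have h : n - 1 + 1 = n := by omega
      rw [h]; exact hLEn
    set j' := Nat.find hex2 with hj'def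
    obtain ⟨hj'ge, hj'eq⟩ := Nat.find_spec hex2
    have hj'le : j' ≤ n - 1 := Nat.find_min' hex2 ⟨hj2, by
      have h : n - 1 + 1 = n := by omega
      rw [h]; exact hLEn⟩
    have hrun : ∀ k, j ≤ k → k ≤ j' → newtonP ν k < newtonP μ k := by
      intro k hk1 hk2
      rcases Nat.eq_or_lt_of_le hk1 with he | hlt
      · exact he ▸ hj3
      · have h1 : ¬(j ≤ k - 1 ∧ newtonP ν (k - 1 + 1) = newtonP μ (k - 1 + 1)) :=
          Nat.find_min hex2 (by omega)
        have hk : k - 1 + 1 = k := by omega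
        rw [hk] at h1
        have hne : newtonP ν k ≠ newtonP μ k := fun h => h1 ⟨by omega, h⟩
        exact lt_of_le_of_ne (hLEj k (by omega) (by omega)) hne
    have hBrun : ∀ k, j ≤ k → k ≤ j' → ν (k - 1) = ν k := by
      intro k hk1 hk2
      by_contra hne
      exact hBempty k (by omega) (by omega) (hrun k hk1 hk2)
        (hbrk k (by omega) (by omega) hne)
    have hc : ∀ k, j - 1 ≤ k → k ≤ j' → ν k = ν (j - 1) := by
      intro k
      induction k with
      | zero => intro h1 _; rw [Nat.le_zero.mp h1]
      | succ k ih =>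
        intro h1 h2
        rcases Nat.lt_or_ge k (j - 1) with h | h
        · have he : k + 1 = j - 1 := by omega
          rw [he]
        · have heq : ν (k + 1 - 1) = ν (k + 1) := hBrun (k + 1) (by omega) h2
          rw [Nat.add_sub_cancel] at heq
          rw [← heq]
          exact ih h (by omega)
    have hQ0 : newtonP ν (j - 1) = newtonP μ (j - 1) := by
      rcases Nat.eq_or_lt_of_le hj1 with he | hlt
      · rw [show j - 1 = 0 by omega]; simp [newtonP]
      · have h1 := hjmin (j - 1) (by omega)
        have hnlt : ¬ newtonP ν (j - 1) < newtonP μ (j - 1) := fun h =>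
          h1 ⟨by omega, by omega, h⟩
        exact le_antisymm (hLEj (j - 1) (by omega) (by omega)) (le_of_not_gt hnlt)
    -- numeric bookkeeping
    have e1 : newtonP ν j = newtonP ν (j - 1) + ν (j - 1) := by
      have h := Finset.sum_range_succ ν (j - 1)
      rw [show j - 1 + 1 = j by omega] at h
      exact h
    have e2 : newtonP ν (j' + 1) = newtonP ν j' + ν j' := Finset.sum_range_succ ν j'
    have hb1 : (b j : ℚ) = (b (j - 1) : ℚ) + (a (j - 1) : ℚ) := by
      have h := Finset.sum_range_succ a (j - 1)
      rw [show j - 1 + 1 = j by omega] at h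
      rw [hbdef]; push_cast [h]; ring
    have hb2 : (b (j' + 1) : ℚ) = (b j' : ℚ) + (a j' : ℚ) := by
      have h := Finset.sum_range_succ a j'
      rw [hbdef]; push_cast [h]; ring
    have u1 : (b j : ℚ) - 1 < newtonP ν j := hgap j hj1 hj2 hj3
    have u2 : newtonP ν j < (b j : ℚ) := by rw [← hPμ]; exact hj3
    have u3 : (b j' : ℚ) - 1 < newtonP ν j' := hgap j' (by omega) hj'le (hrun j' hj'ge le_rfl)
    have u4 : newtonP ν j' < (b j' : ℚ) := by rw [← hPμ]; exact hrun j' hj'ge le_rfl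
    have u5 : newtonP ν (j' + 1) = (b (j' + 1) : ℚ) := by rw [hj'eq, hPμ]
    have u6 : newtonP ν (j - 1) = (b (j - 1) : ℚ) := by rw [hQ0, hPμ]
    have hceq : ν j' = ν (j - 1) := hc j' (by omega) le_rfl
    have q1 : (a j' : ℚ) < ν (j - 1) := by linarith
    have q2 : ν (j - 1) < (a j' : ℚ) + 1 := by linarith
    have q3 : ν (j - 1) < (a (j - 1) : ℚ) := by linarith
    have q4 : (a (j - 1) : ℚ) - 1 < ν (j - 1) := by linarith
    have r1 : a j' < a (j - 1) := by exact_mod_cast q1.trans q3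
    have r2 : a (j - 1) < a j' + 2 := by
      have : (a (j - 1) : ℚ) < (a j' : ℚ) + 2 := by linarith
      exact_mod_cast this
    exact step_aux n a ha (j - 1) j' (by omega) (by omega) (by omega)
  · rintro ⟨j₀, hj₀, hdiff⟩
    set c : ℚ := (a j₀ : ℚ) - 1 / 2 with hcdef
    set ν : ℕ → ℚ := fun k => if k = j₀ ∨ k = j₀ + 1 then c else μ k with hνdef
    have hν1 : ν j₀ = c := if_pos (Or.inl rfl)
    have hν2 : ν (j₀ + 1) = c := if_pos (Or.inr rfl)
    have hν3 : ∀ k, k ≠ j₀ → k ≠ j₀ + 1 → ν k = μ k := by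
      intro k h1 h2
      simp only [hνdef]
      rw [if_neg (by tauto)]
    have ha1 : ((a (j₀ + 1) : ℤ) : ℚ) = (a j₀ : ℚ) - 1 := by
      have : a (j₀ + 1) = a j₀ - 1 := by omega
      rw [this]; push_cast; ring
    have hνsub : ∀ k, ν k - μ k =
        (if k = j₀ then -(1 / 2 : ℚ) else 0) + (if k = j₀ + 1 then (1 / 2 : ℚ) else 0) := by
      intro k
      by_cases h1 : k = j₀
      · subst h1
        rw [hν1, hμ, if_pos rfl, if_neg (by omega), hcdef]
        ring
      · by_cases h2 : k = j₀ + 1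
        · subst h2
          rw [hν2, hμ, if_neg h1, if_pos rfl, hcdef, ha1]
          ring
        · rw [hν3 k h1 h2, if_neg h1, if_neg h2]
          ring
    have hP : ∀ jj, newtonP ν jj = newtonP μ jj +
        ((if j₀ < jj then -(1 / 2 : ℚ) else 0) + (if j₀ + 1 < jj then (1 / 2 : ℚ) else 0)) := by
      intro jj
      have h1 : newtonP ν jj - newtonP μ jj = ∑ k ∈ Finset.range jj, (ν k - μ k) :=
        (Finset.sum_sub_distrib ν μ).symm
      rw [Finset.sum_congr rfl (fun k _ => hνsub k), Finset.sum_add_distrib] at h1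
      simp only [Finset.sum_ite_eq', Finset.mem_range] at h1
      linarith [h1]
    have hPcases : ∀ jj, jj ≠ j₀ + 1 → newtonP ν jj = newtonP μ jj := by
      intro jj h
      rw [hP jj]
      split_ifs with h1 h2
      · ring
      · exfalso; omega
      · exfalso; omega
      · ring
    have heq3 : newtonP ν (j₀ + 1) = newtonP μ (j₀ + 1) - 1 / 2 := by
      rw [hP (j₀ + 1), if_pos (by omega), if_neg (by omega)]
      ring
    have hsumn : newtonP ν n = newtonP μ n := hPcases n (by omega)
    refine ⟨ν, ⟨?_, ?_, ?_⟩, ⟨hsumn, ?_⟩, ⟨j₀, by omega, ?_⟩, ?_⟩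
    · -- weakly decreasing
      intro k hk
      rcases eq_or_ne k j₀ with h | h
      · subst h; rw [hν1, hν2]
      · rcases eq_or_ne k (j₀ + 1) with h2 | h2
        · subst h2
          rw [hν2, hν3 (j₀ + 1 + 1) (by omega) (by omega), hμ, hcdef]
          have h3 : a (j₀ + 1 + 1) ≤ a (j₀ + 1) := ha (j₀ + 1) hk
          have h4 : ((a (j₀ + 1 + 1) : ℤ) : ℚ) ≤ ((a (j₀ + 1) : ℤ) : ℚ) := by exact_mod_cast h3
          rw [ha1] at h4
          linarith
        · rcases eq_or_ne (k + 1) j₀ with h3 | h3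
          · rw [h3, hν1, hν3 k h h2, hμ, hcdef]
            have h4 : a j₀ ≤ a k := by
              have := ha k hk
              rw [h3] at this
              exact this
            have h5 : ((a j₀ : ℤ) : ℚ) ≤ ((a k : ℤ) : ℚ) := by exact_mod_cast h4
            linarith
          · rcases eq_or_ne (k + 1) (j₀ + 1) with h4 | h4
            · exfalso; omega
            · rw [hν3 (k + 1) h3 h4, hν3 k h h2, hμ, hμ]
              exact_mod_cast ha k hk
    · -- integral total sum
      exact ⟨b n, by rw [hsumn, hPμ]⟩
    · -- breakpoints
      intro jj hjj1 hjj2 hne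
      rcases eq_or_ne jj (j₀ + 1) with he | he
      · exfalso
        apply hne
        rw [he, Nat.add_sub_cancel, hν1, hν2]
      · exact ⟨b jj, by rw [hPcases jj he, hPμ]⟩
    · -- dominance
      intro jj hjj1 hjj2
      rcases eq_or_ne jj (j₀ + 1) with he | he
      · rw [he, heq3]; linarith
      · rw [hPcases jj he]
    · -- ν ≠ μ at j₀
      rw [hν1, hμ, hcdef]
      intro hE
      have : ((a j₀ : ℤ) : ℚ) - 1 / 2 = ((a j₀ : ℤ) : ℚ) := hE
      linarith
    · -- essential gap zero
      have hIe : {p : ℕ × ℤ | 1 ≤ p.1 ∧ p.1 ≤ n - 1 ∧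
          newtonP ν p.1 < (p.2 : ℚ) ∧ (p.2 : ℚ) < newtonP μ p.1} = ∅ := by
        ext ⟨jj, m⟩
        simp only [Set.mem_setOf_eq, Set.mem_empty_iff_false, iff_false, not_and]
        intro h1 h2 h3 h4
        rcases eq_or_ne jj (j₀ + 1) with he | he
        · subst he
          rw [heq3, hPμ] at h3
          rw [hPμ] at h4
          have hm1 : m < b (j₀ + 1) := by exact_mod_cast h4
          have hm2 : m ≤ b (j₀ + 1) - 1 := by omega
          have hm3 : (m : ℚ) ≤ (b (j₀ + 1) : ℚ) - 1 := by exact_mod_cast hm2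
          linarith
        · rw [hPcases jj he] at h3
          linarith
      have hBe : {j : ℕ | 1 ≤ j ∧ j ≤ n - 1 ∧ IsIntQ (newtonP ν j) ∧
          newtonP ν j < newtonP μ j} = ∅ := by
        ext jj
        simp only [Set.mem_setOf_eq, Set.mem_empty_iff_false, iff_false, not_and]
        intro h1 h2 h3 h4
        rcases eq_or_ne jj (j₀ + 1) with he | he
        · subst he
          obtain ⟨m, hm⟩ := h3
          rw [heq3, hPμ] at hm
          have : ((2 * m : ℤ) : ℚ) = ((2 * b (j₀ + 1) - 1 : ℤ) : ℚ) := by push_cast; linarith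
          have : 2 * m = 2 * b (j₀ + 1) - 1 := by exact_mod_cast this
          omega
        · rw [hPcases jj he] at h4
          linarith
      rw [nI, nB1, hIe, hBe, Set.ncard_empty, Set.ncard_empty]
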